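/- arXiv:math/0603328 — 3 statements merged into one kernel-verified Lean document; each statement's English description precedes it below -/
import Mathlib

section
/- Let X be a measurable space, P a Markov transition kernel on X, V : X → [0,∞) and W, G : X → [0,∞) measurable functions, C ⊆ X measurable, and constants b < ∞, κ < ∞ such that ∫ V(y) P(x,dy) + W(x) ≤ V(x) + b·1_C(x) and G(x) ≤ κ W(x) for all x ∈ X. Define the sub-Markov scaled kernel Q(x,·) := e^{−G(x)} P(x,·). Then for every n ≥ 1, every x ∈ X, and every measurable set A with P^n(x,A) > 0, Q^n(x,A) ≥ exp(−κ (V(x) + n b) / P^n(x,A)) · P^n(x,A). -/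
open MeasureTheory ProbabilityTheory Filter
open scoped ENNReal

noncomputable def eneg (t : ℝ≥0∞) : ℝ≥0∞ :=
  if t = ⊤ then 0 else ENNReal.ofReal (Real.exp (-t.toReal))

lemma eneg_zero : eneg 0 = 1 := by simp [eneg]

lemma eneg_top : eneg ⊤ = 0 := by simp [eneg]

lemma eneg_ne_top (t : ℝ≥0∞) : eneg t ≠ ⊤ := by
  unfold eneg; split <;> simp

lemma eneg_le_one (t : ℝ≥0∞) : eneg t ≤ 1 := by
  unfold eneg; split
  · simp
  · rw [show (1 : ℝ≥0∞) = ENNReal.ofReal 1 by simp]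
    exact ENNReal.ofReal_le_ofReal (by
      simpa using Real.exp_le_exp.2 (neg_nonpos.2 ENNReal.toReal_nonneg))

lemma eneg_pos {t : ℝ≥0∞} (ht : t ≠ ⊤) : 0 < eneg t := by
  unfold eneg; rw [if_neg ht]
  exact ENNReal.ofReal_pos.2 (Real.exp_pos _)

lemma eneg_anti {t t' : ℝ≥0∞} (h : t ≤ t') : eneg t' ≤ eneg t := by
  unfold eneg
  rcases eq_or_ne t' ⊤ with h' | h'
  · simp [h']
  · have ht : t ≠ ⊤ := fun h'' => h' (top_le_iff.1 (h'' ▸ h))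
    rw [if_neg h', if_neg ht]
    exact ENNReal.ofReal_le_ofReal (Real.exp_le_exp.2 (neg_le_neg
      ((ENNReal.toReal_le_toReal ht h').2 h)))

lemma eneg_add (t t' : ℝ≥0∞) : eneg (t + t') = eneg t * eneg t' := by
  rcases eq_or_ne t ⊤ with h | h
  · simp [h, eneg_top]
  rcases eq_or_ne t' ⊤ with h' | h'
  · simp [h', eneg_top]
  unfold eneg
  rw [if_neg h, if_neg h', if_neg (by simp [ENNReal.add_ne_top, h, h'])]
  rw [ENNReal.toReal_add h h', neg_add, Real.exp_add, ENNReal.ofReal_mul (Real.exp_pos _).le]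

lemma eneg_ofReal {r : ℝ} (hr : 0 ≤ r) :
    eneg (ENNReal.ofReal r) = ENNReal.ofReal (Real.exp (-r)) := by
  unfold eneg
  rw [if_neg ENNReal.ofReal_ne_top, ENNReal.toReal_ofReal hr]

lemma measurable_eneg : Measurable eneg := by
  unfold eneg
  exact Measurable.ite (measurableSet_singleton ⊤) measurable_const
    (ENNReal.measurable_ofReal.comp
      ((Real.measurable_exp.comp measurable_neg).comp ENNReal.measurable_toReal))

/-- Tangent-line (Jensen) pointwise inequality. -/
lemma key_pointwise (a m c : ℝ≥0∞) (ha : a ≠ ⊤) (hc : c ≠ ⊤) :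
    eneg c * ((1 + c) * a) ≤ a * eneg (m / a) + eneg c * m := by
  rcases eq_or_ne a 0 with h0 | h0
  · simp [h0]
  rcases eq_or_ne m ⊤ with hm | hm
  · rw [hm, ENNReal.mul_top (eneg_pos hc).ne']
    exact le_top.trans (le_add_self)
  -- all finite now
  have hma : m / a ≠ ⊤ := by
    simp [ENNReal.div_eq_top, h0, hm]
  set A := a.toReal with hA
  set M := m.toReal
  set Cr := c.toReal
  have hApos : 0 < A := ENNReal.toReal_pos h0 ha
  have hMnn : 0 ≤ M := ENNReal.toReal_nonneg
  have hCnn : 0 ≤ Cr := ENNReal.toReal_nonneg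
  have hdiv : (m / a).toReal = M / A := ENNReal.toReal_div m a
  -- real inequality
  have hreal : Real.exp (-Cr) * ((1 + Cr) * A) ≤ A * Real.exp (-(M / A)) + Real.exp (-Cr) * M := by
    have h1 : 1 + (Cr - M / A) ≤ Real.exp (Cr - M / A) := by
      linarith [Real.add_one_le_exp (Cr - M / A)]
    have h2 : Real.exp (-(M / A)) = Real.exp (-Cr) * Real.exp (Cr - M / A) := by
      rw [← Real.exp_add]; ring_nf
    have hE : 0 < Real.exp (-Cr) := Real.exp_pos _
    rw [h2]
    have h3 : A * (Real.exp (-Cr) * (1 + (Cr - M / A))) ≤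
        A * (Real.exp (-Cr) * Real.exp (Cr - M / A)) :=
      mul_le_mul_of_nonneg_left (mul_le_mul_of_nonneg_left h1 hE.le) hApos.le
    have h4 : A * (Real.exp (-Cr) * (1 + (Cr - M / A))) =
        Real.exp (-Cr) * ((1 + Cr) * A) - Real.exp (-Cr) * M := by
      field_simp
      ring
    linarith
  -- transfer to ENNReal
  have ea : a = ENNReal.ofReal A := (ENNReal.ofReal_toReal ha).symm
  have em : m = ENNReal.ofReal M := (ENNReal.ofReal_toReal hm).symm
  have ec1 : eneg c = ENNReal.ofReal (Real.exp (-Cr)) := by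
    unfold eneg; rw [if_neg hc]
  have ec2 : eneg (m / a) = ENNReal.ofReal (Real.exp (-(M / A))) := by
    unfold eneg; rw [if_neg hma, hdiv]
  have e1c : (1 : ℝ≥0∞) + c = ENNReal.ofReal (1 + Cr) := by
    rw [ENNReal.ofReal_add zero_le_one hCnn, ENNReal.ofReal_one,
      ENNReal.ofReal_toReal hc]
  calc eneg c * ((1 + c) * a)
      = ENNReal.ofReal (Real.exp (-Cr) * ((1 + Cr) * A)) := by
        rw [ec1, e1c, ea, ← ENNReal.ofReal_mul (by positivity),
          ← ENNReal.ofReal_mul (Real.exp_pos _).le]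
    _ ≤ ENNReal.ofReal (A * Real.exp (-(M / A)) + Real.exp (-Cr) * M) :=
        ENNReal.ofReal_le_ofReal hreal
    _ ≤ a * eneg (m / a) + eneg c * m := by
        rw [ENNReal.ofReal_add (by positivity) (by positivity),
          ENNReal.ofReal_mul hApos.le, ENNReal.ofReal_mul (Real.exp_pos _).le,
          ← ea, ← em, ← ec1, ← ec2]

/-- Jensen-type inequality for `eneg` via the tangent line trick. -/
lemma jensen_eneg {X : Type*} [MeasurableSpace X] (μ : Measure X)
    (a m : X → ℝ≥0∞) (ha : Measurable a) (hm : Measurable m)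
    (ha1 : ∀ y, a y ≤ 1)
    (ht : ∫⁻ y, m y ∂μ ≠ ⊤) (hs : ∫⁻ y, a y ∂μ ≠ ⊤) :
    (∫⁻ y, a y ∂μ) * eneg ((∫⁻ y, m y ∂μ) / (∫⁻ y, a y ∂μ)) ≤
      ∫⁻ y, a y * eneg (m y / a y) ∂μ := by
  set s := ∫⁻ y, a y ∂μ with hsdef
  set t := ∫⁻ y, m y ∂μ with htdef
  rcases eq_or_ne s 0 with h0 | h0
  · rw [h0, zero_mul]; exact zero_le
  set c := t / s with hcdef
  have hc : c ≠ ⊤ := by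
    simp [hcdef, ENNReal.div_eq_top, h0, ht]
  -- integrate the pointwise inequality
  have hpt : ∀ y, eneg c * ((1 + c) * a y) ≤ a y * eneg (m y / a y) + eneg c * m y :=
    fun y => key_pointwise (a y) (m y) c (lt_of_le_of_lt (ha1 y) (by simp)).ne hc
  have hint : ∫⁻ y, eneg c * ((1 + c) * a y) ∂μ ≤
      ∫⁻ y, (a y * eneg (m y / a y) + eneg c * m y) ∂μ := lintegral_mono hpt
  have hL : ∫⁻ y, eneg c * ((1 + c) * a y) ∂μ = eneg c * ((1 + c) * s) := by
    rw [lintegral_const_mul _ (ha.const_mul _), lintegral_const_mul _ ha]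
  have hR : ∫⁻ y, (a y * eneg (m y * (a y)⁻¹) + eneg c * m y) ∂μ =
      (∫⁻ y, a y * eneg (m y / a y) ∂μ) + eneg c * t := by
    rw [lintegral_add_right _ (hm.const_mul _), lintegral_const_mul _ hm]
    simp [div_eq_mul_inv, htdef]
  simp only [div_eq_mul_inv] at hint hL
  rw [hL, hR] at hint
  have hct : c * s = t := ENNReal.div_mul_cancel h0 hs
  have hexp : eneg c * ((1 + c) * s) = eneg c * s + eneg c * t := by
    rw [add_mul, one_mul, mul_add, hct]
  rw [hexp] at hint
  have hfin : eneg c * t ≠ ⊤ := ENNReal.mul_ne_top (eneg_ne_top _) ht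
  have := (ENNReal.add_le_add_iff_right hfin).1 hint
  simpa [mul_comm, div_eq_mul_inv] using this
noncomputable def Pl {X : Type*} [MeasurableSpace X] (P : Kernel X X)
    (g : X → ℝ≥0∞) (x : X) : ℝ≥0∞ := ∫⁻ y, g y ∂(P x)

noncomputable def Ql {X : Type*} [MeasurableSpace X] (P : Kernel X X) (G : X → ℝ)
    (g : X → ℝ≥0∞) (x : X) : ℝ≥0∞ :=
  ENNReal.ofReal (Real.exp (-G x)) * ∫⁻ y, g y ∂(P x)

noncomputable def sseq {X : Type*} [MeasurableSpace X] (P : Kernel X X) (W : X → ℝ) :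
    ℕ → X → ℝ≥0∞
  | 0 => fun _ => 0
  | n + 1 => fun x => ENNReal.ofReal (W x) + Pl P (sseq P W n) x

noncomputable def mseq {X : Type*} [MeasurableSpace X] (P : Kernel X X) (G : X → ℝ)
    (A : Set X) : ℕ → X → ℝ≥0∞
  | 0 => fun _ => 0
  | n + 1 => fun x =>
      ENNReal.ofReal (G x) * (Pl P)^[n + 1] (A.indicator 1) x + Pl P (mseq P G A n) x

section Aux

variable {X : Type*} [MeasurableSpace X] (P : Kernel X X) [IsMarkovKernel P]

lemma Pl_measurable {g : X → ℝ≥0∞} (hg : Measurable g) : Measurable (Pl P g) :=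
  Measurable.lintegral_kernel hg

lemma meas_aiter {A : Set X} (hA : MeasurableSet A) (n : ℕ) :
    Measurable ((Pl P)^[n] (A.indicator 1)) := by
  induction n with
  | zero => exact measurable_one.indicator hA
  | succ n ih => rw [Function.iterate_succ_apply']; exact Pl_measurable P ih

lemma aiter_le_one {A : Set X} (n : ℕ) (x : X) :
    (Pl P)^[n] (A.indicator 1) x ≤ 1 := by
  induction n generalizing x with
  | zero =>
    simp only [Function.iterate_zero, id_eq]
    exact Set.indicator_le_self' (by simp) x |>.trans (by simp)
  | succ n ih =>
    rw [Function.iterate_succ_apply']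
    calc Pl P ((Pl P)^[n] (A.indicator 1)) x ≤ ∫⁻ _, 1 ∂(P x) := lintegral_mono ih
      _ = 1 := by simp

lemma meas_sseq {W : X → ℝ} (hW : Measurable W) (n : ℕ) : Measurable (sseq P W n) := by
  induction n with
  | zero => exact measurable_const
  | succ n ih =>
    exact (ENNReal.measurable_ofReal.comp hW).add (Pl_measurable P ih)

lemma meas_mseq {G : X → ℝ} (hG : Measurable G) {A : Set X} (hA : MeasurableSet A)
    (n : ℕ) : Measurable (mseq P G A n) := by
  induction n with
  | zero => exact measurable_const
  | succ n ih =>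
    exact ((ENNReal.measurable_ofReal.comp hG).mul (meas_aiter P hA (n + 1))).add
      (Pl_measurable P ih)

end Aux
section Main

variable {X : Type*} [MeasurableSpace X] (P : Kernel X X) [IsMarkovKernel P]

lemma drift_sum_bound (V W : X → ℝ) (hVm : Measurable V) (hWm : Measurable W)
    (C : Set X) (b : ℝ) (hb : 0 ≤ b)
    (hdrift : ∀ x, (∫⁻ y, ENNReal.ofReal (V y) ∂(P x)) + ENNReal.ofReal (W x) ≤
      ENNReal.ofReal (V x) + ENNReal.ofReal b * C.indicator 1 x) :
    ∀ n x, (Pl P)^[n] (fun y => ENNReal.ofReal (V y)) x + sseq P W n x ≤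
      ENNReal.ofReal (V x) + n * ENNReal.ofReal b := by
  intro n
  induction n with
  | zero => intro x; simp [sseq]
  | succ n ih =>
    intro x
    have hmeasV : Measurable fun y => ENNReal.ofReal (V y) :=
      ENNReal.measurable_ofReal.comp hVm
    have hmv : Measurable ((Pl P)^[n] (fun y => ENNReal.ofReal (V y))) := by
      clear ih
      induction n with
      | zero => exact hmeasV
      | succ n ih2 => rw [Function.iterate_succ_apply']; exact Pl_measurable P ih2
    have h1 : (Pl P)^[n + 1] (fun y => ENNReal.ofReal (V y)) x + sseq P W (n + 1) x =
        Pl P (fun y => (Pl P)^[n] (fun z => ENNReal.ofReal (V z)) y + sseq P W n y) x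
          + ENNReal.ofReal (W x) := by
      rw [Function.iterate_succ_apply']
      show Pl P _ x + (ENNReal.ofReal (W x) + Pl P (sseq P W n) x) = _
      have hsplit : Pl P (fun y => (Pl P)^[n] (fun z => ENNReal.ofReal (V z)) y + sseq P W n y) x
          = Pl P ((Pl P)^[n] fun z => ENNReal.ofReal (V z)) x + Pl P (sseq P W n) x :=
        lintegral_add_left hmv _
      rw [hsplit]
      ring
    rw [h1]
    have h2 : Pl P (fun y => (Pl P)^[n] (fun z => ENNReal.ofReal (V z)) y + sseq P W n y) x ≤
        Pl P (fun y => ENNReal.ofReal (V y) + n * ENNReal.ofReal b) x :=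
      lintegral_mono fun y => ih y
    have h3 : Pl P (fun y => ENNReal.ofReal (V y) + n * ENNReal.ofReal b) x =
        (∫⁻ y, ENNReal.ofReal (V y) ∂(P x)) + n * ENNReal.ofReal b := by
      show (∫⁻ y, ENNReal.ofReal (V y) + ↑n * ENNReal.ofReal b ∂(P x)) = _
      rw [lintegral_add_right _ measurable_const, lintegral_const, measure_univ, mul_one]
    have h4 : (∫⁻ y, ENNReal.ofReal (V y) ∂(P x)) + ENNReal.ofReal (W x) ≤
        ENNReal.ofReal (V x) + ENNReal.ofReal b := by
      refine (hdrift x).trans (add_le_add_right ?_ _)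
      calc ENNReal.ofReal b * C.indicator 1 x ≤ ENNReal.ofReal b * 1 := by
            gcongr
            exact Set.indicator_le_self' (by simp) x |>.trans (by simp)
        _ = ENNReal.ofReal b := mul_one _
    calc Pl P (fun y => (Pl P)^[n] (fun z => ENNReal.ofReal (V z)) y + sseq P W n y) x
          + ENNReal.ofReal (W x)
        ≤ ((∫⁻ y, ENNReal.ofReal (V y) ∂(P x)) + n * ENNReal.ofReal b)
          + ENNReal.ofReal (W x) := by
          exact add_le_add_left (h2.trans (le_of_eq h3)) _
      _ = ((∫⁻ y, ENNReal.ofReal (V y) ∂(P x)) + ENNReal.ofReal (W x)) + n * ENNReal.ofReal b := by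
          ring
      _ ≤ (ENNReal.ofReal (V x) + ENNReal.ofReal b) + n * ENNReal.ofReal b :=
          add_le_add_left h4 _
      _ = ENNReal.ofReal (V x) + (n + 1 : ℕ) * ENNReal.ofReal b := by
          push_cast
          ring

lemma sseq_bound (V W : X → ℝ) (hVm : Measurable V) (hWm : Measurable W)
    (C : Set X) (b : ℝ) (hb : 0 ≤ b)
    (hdrift : ∀ x, (∫⁻ y, ENNReal.ofReal (V y) ∂(P x)) + ENNReal.ofReal (W x) ≤
      ENNReal.ofReal (V x) + ENNReal.ofReal b * C.indicator 1 x)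
    (n : ℕ) (x : X) :
    sseq P W n x ≤ ENNReal.ofReal (V x) + n * ENNReal.ofReal b :=
  le_trans (le_add_self) (drift_sum_bound P V W hVm hWm C b hb hdrift n x)

lemma mseq_bound (W G : X → ℝ) (hWm : Measurable W) (κ : ℝ) (hκ : 0 ≤ κ)
    (hGW : ∀ x, G x ≤ κ * W x) (A : Set X) (hA : MeasurableSet A) :
    ∀ n x, mseq P G A n x ≤ ENNReal.ofReal κ * sseq P W n x := by
  intro n
  induction n with
  | zero => intro x; simp [mseq]
  | succ n ih =>
    intro x
    show ENNReal.ofReal (G x) * (Pl P)^[n + 1] (A.indicator 1) x + Pl P (mseq P G A n) x ≤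
      ENNReal.ofReal κ * (ENNReal.ofReal (W x) + Pl P (sseq P W n) x)
    have h1 : ENNReal.ofReal (G x) * (Pl P)^[n + 1] (A.indicator 1) x ≤
        ENNReal.ofReal κ * ENNReal.ofReal (W x) := by
      calc ENNReal.ofReal (G x) * (Pl P)^[n + 1] (A.indicator 1) x
          ≤ ENNReal.ofReal (G x) * 1 := by gcongr; exact aiter_le_one P (n + 1) x
        _ = ENNReal.ofReal (G x) := mul_one _
        _ ≤ ENNReal.ofReal (κ * W x) := ENNReal.ofReal_le_ofReal (hGW x)
        _ = ENNReal.ofReal κ * ENNReal.ofReal (W x) := ENNReal.ofReal_mul hκ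
    have h2 : Pl P (mseq P G A n) x ≤ ENNReal.ofReal κ * Pl P (sseq P W n) x := by
      calc Pl P (mseq P G A n) x
          ≤ Pl P (fun y => ENNReal.ofReal κ * sseq P W n y) x := lintegral_mono fun y => ih y
        _ = ENNReal.ofReal κ * Pl P (sseq P W n) x := by
            exact lintegral_const_mul _ (meas_sseq P hWm n)
    calc ENNReal.ofReal (G x) * (Pl P)^[n + 1] (A.indicator 1) x + Pl P (mseq P G A n) x
        ≤ ENNReal.ofReal κ * ENNReal.ofReal (W x) + ENNReal.ofReal κ * Pl P (sseq P W n) x :=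
          add_le_add h1 h2
      _ = ENNReal.ofReal κ * (ENNReal.ofReal (W x) + Pl P (sseq P W n) x) := (mul_add _ _ _).symm

end Main
section MainInd

variable {X : Type*} [MeasurableSpace X] (P : Kernel X X) [IsMarkovKernel P]

lemma main_induction (V W G : X → ℝ) (hG0 : ∀ x, 0 ≤ G x)
    (hVm : Measurable V) (hWm : Measurable W) (hGm : Measurable G)
    (C : Set X) (b κ : ℝ) (hb : 0 ≤ b) (hκ : 0 ≤ κ)
    (hdrift : ∀ x, (∫⁻ y, ENNReal.ofReal (V y) ∂(P x)) + ENNReal.ofReal (W x) ≤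
      ENNReal.ofReal (V x) + ENNReal.ofReal b * C.indicator 1 x)
    (hGW : ∀ x, G x ≤ κ * W x) (A : Set X) (hA : MeasurableSet A) :
    ∀ n x, (Pl P)^[n] (A.indicator 1) x *
        eneg (mseq P G A n x / (Pl P)^[n] (A.indicator 1) x) ≤
      (Ql P G)^[n] (A.indicator 1) x := by
  intro n
  induction n with
  | zero => intro x; simp [mseq, ENNReal.zero_div, eneg_zero]
  | succ n ih =>
    intro x
    have hax : (Pl P)^[n + 1] (A.indicator 1) x = Pl P ((Pl P)^[n] (A.indicator 1)) x :=
      congrFun (Function.iterate_succ_apply' (Pl P) n (A.indicator 1)) x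
    have hqx : (Ql P G)^[n + 1] (A.indicator 1) x =
        ENNReal.ofReal (Real.exp (-G x)) *
          ∫⁻ y, (Ql P G)^[n] (A.indicator 1) y ∂(P x) := by
      rw [Function.iterate_succ_apply']; rfl
    rcases eq_or_ne (Pl P ((Pl P)^[n] (A.indicator 1)) x) 0 with h0 | h0
    · rw [hax, h0, zero_mul]; exact zero_le
    have hsle : Pl P ((Pl P)^[n] (A.indicator 1)) x ≤ 1 := by
      rw [← hax]; exact aiter_le_one P (n + 1) x
    have hsfin : Pl P ((Pl P)^[n] (A.indicator 1)) x ≠ ⊤ :=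
      ne_top_of_le_ne_top ENNReal.one_ne_top hsle
    have ht : Pl P (mseq P G A n) x ≠ ⊤ := by
      have hm1 : Pl P (mseq P G A n) x ≤ ENNReal.ofReal κ * Pl P (sseq P W n) x := by
        calc Pl P (mseq P G A n) x
            ≤ Pl P (fun y => ENNReal.ofReal κ * sseq P W n y) x :=
              lintegral_mono (mseq_bound P W G hWm κ hκ hGW A hA n)
          _ = ENNReal.ofReal κ * Pl P (sseq P W n) x :=
              lintegral_const_mul _ (meas_sseq P hWm n)
      have hs2 : Pl P (sseq P W n) x ≤
          ENNReal.ofReal (V x) + (n + 1 : ℕ) * ENNReal.ofReal b := by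
        refine le_trans ?_ (sseq_bound P V W hVm hWm C b hb hdrift (n + 1) x)
        exact self_le_add_left _ _
      refine ne_top_of_le_ne_top ?_ (hm1.trans (mul_le_mul_right hs2 _))
      exact ENNReal.mul_ne_top ENNReal.ofReal_ne_top
        (ENNReal.add_ne_top.2 ⟨ENNReal.ofReal_ne_top,
          ENNReal.mul_ne_top (ENNReal.natCast_ne_top _) ENNReal.ofReal_ne_top⟩)
    have hmsplit : mseq P G A (n + 1) x / Pl P ((Pl P)^[n] (A.indicator 1)) x =
        ENNReal.ofReal (G x) +
          Pl P (mseq P G A n) x / Pl P ((Pl P)^[n] (A.indicator 1)) x := by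
      show (ENNReal.ofReal (G x) * (Pl P)^[n + 1] (A.indicator 1) x
        + Pl P (mseq P G A n) x) / _ = _
      rw [hax, ENNReal.add_div, mul_div_assoc, ENNReal.div_self h0 hsfin, mul_one]
    have hjen := jensen_eneg (P x) ((Pl P)^[n] (A.indicator 1)) (mseq P G A n)
      (meas_aiter P hA n) (meas_mseq P hGm hA n) (aiter_le_one P n) ht hsfin
    calc (Pl P)^[n + 1] (A.indicator 1) x *
          eneg (mseq P G A (n + 1) x / (Pl P)^[n + 1] (A.indicator 1) x)
        = Pl P ((Pl P)^[n] (A.indicator 1)) x *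
            (ENNReal.ofReal (Real.exp (-G x)) *
              eneg (Pl P (mseq P G A n) x / Pl P ((Pl P)^[n] (A.indicator 1)) x)) := by
          rw [hax, hmsplit, eneg_add, eneg_ofReal (hG0 x)]
      _ = ENNReal.ofReal (Real.exp (-G x)) *
            (Pl P ((Pl P)^[n] (A.indicator 1)) x *
              eneg (Pl P (mseq P G A n) x / Pl P ((Pl P)^[n] (A.indicator 1)) x)) := by
          ring
      _ ≤ ENNReal.ofReal (Real.exp (-G x)) *
            ∫⁻ y, (Pl P)^[n] (A.indicator 1) y *
              eneg (mseq P G A n y / (Pl P)^[n] (A.indicator 1) y) ∂(P x) :=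
          mul_le_mul_right hjen _
      _ ≤ ENNReal.ofReal (Real.exp (-G x)) *
            ∫⁻ y, (Ql P G)^[n] (A.indicator 1) y ∂(P x) :=
          mul_le_mul_right (lintegral_mono fun y => ih y) _
      _ = (Ql P G)^[n + 1] (A.indicator 1) x := hqx.symm

end MainInd

/-- **Jensen-inequality minorization bound (26)–(27)** used in the proof of
Proposition 2.5. Under the drift condition `PV + W ≤ V + b·1_C` and the domination
`G ≤ κ W`, the sub-Markov scaled kernel `Q = I_{e^{−G}} P` satisfies
`Q^n(x,A) ≥ exp(−κ(V(x) + nb)/P^n(x,A)) P^n(x,A)` whenever `P^n(x,A) > 0`.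
Here the `n`-fold kernel iterates are represented by the `n`-fold iterates of the
associated operators on nonnegative functions, applied to the indicator of `A`. -/
theorem scaled_kernel_minorization {X : Type*} [MeasurableSpace X]
    (P : Kernel X X) [IsMarkovKernel P]
    (V W G : X → ℝ) (hV0 : ∀ x, 0 ≤ V x) (hW0 : ∀ x, 0 ≤ W x) (hG0 : ∀ x, 0 ≤ G x)
    (hVm : Measurable V) (hWm : Measurable W) (hGm : Measurable G)
    (C : Set X) (hC : MeasurableSet C) (b κ : ℝ) (hb : 0 ≤ b) (hκ : 0 ≤ κ)
    (hdrift : ∀ x, (∫⁻ y, ENNReal.ofReal (V y) ∂(P x)) + ENNReal.ofReal (W x) ≤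
      ENNReal.ofReal (V x) + ENNReal.ofReal b * C.indicator 1 x)
    (hGW : ∀ x, G x ≤ κ * W x)
    (Pop Qop : (X → ℝ≥0∞) → X → ℝ≥0∞)
    (hPop : ∀ (g : X → ℝ≥0∞) (x : X), Pop g x = ∫⁻ y, g y ∂(P x))
    (hQop : ∀ (g : X → ℝ≥0∞) (x : X),
      Qop g x = ENNReal.ofReal (Real.exp (-G x)) * ∫⁻ y, g y ∂(P x)) :
    ∀ n : ℕ, 1 ≤ n → ∀ x : X, ∀ A : Set X, MeasurableSet A →
      0 < Pop^[n] (A.indicator 1) x →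
      ENNReal.ofReal (Real.exp (-(κ * (V x + n * b)) / (Pop^[n] (A.indicator 1) x).toReal))
          * Pop^[n] (A.indicator 1) x ≤ Qop^[n] (A.indicator 1) x := by
  have hPeq : Pop = Pl P := funext fun g => funext fun x => hPop g x
  have hQeq : Qop = Ql P G := funext fun g => funext fun x => hQop g x
  subst hPeq hQeq
  intro n _ x A hA hpos
  have h0 : (Pl P)^[n] (A.indicator 1) x ≠ 0 := hpos.ne'
  have hKnn : 0 ≤ κ * (V x + n * b) :=
    mul_nonneg hκ (add_nonneg (hV0 x) (mul_nonneg (Nat.cast_nonneg n) hb))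
  have hm : mseq P G A n x ≤ ENNReal.ofReal (κ * (V x + n * b)) := by
    calc mseq P G A n x ≤ ENNReal.ofReal κ * sseq P W n x :=
          mseq_bound P W G hWm κ hκ hGW A hA n x
      _ ≤ ENNReal.ofReal κ * (ENNReal.ofReal (V x) + n * ENNReal.ofReal b) :=
          mul_le_mul_right (sseq_bound P V W hVm hWm C b hb hdrift n x) _
      _ = ENNReal.ofReal (κ * (V x + n * b)) := by
          rw [ENNReal.ofReal_mul hκ, ENNReal.ofReal_add (hV0 x)
            (mul_nonneg (Nat.cast_nonneg n) hb), ENNReal.ofReal_mul (Nat.cast_nonneg n),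
            ENNReal.ofReal_natCast]
  have hdivne : ENNReal.ofReal (κ * (V x + n * b)) / (Pl P)^[n] (A.indicator 1) x ≠ ⊤ := by
    simp [ENNReal.div_eq_top, h0]
  have hK : eneg (ENNReal.ofReal (κ * (V x + n * b)) / (Pl P)^[n] (A.indicator 1) x) =
      ENNReal.ofReal (Real.exp (-(κ * (V x + n * b)) /
        ((Pl P)^[n] (A.indicator 1) x).toReal)) := by
    unfold eneg
    rw [if_neg hdivne, ENNReal.toReal_div, ENNReal.toReal_ofReal hKnn, neg_div]
  calc ENNReal.ofReal (Real.exp (-(κ * (V x + n * b)) /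
          ((Pl P)^[n] (A.indicator 1) x).toReal)) * (Pl P)^[n] (A.indicator 1) x
      = (Pl P)^[n] (A.indicator 1) x *
          eneg (ENNReal.ofReal (κ * (V x + n * b)) / (Pl P)^[n] (A.indicator 1) x) := by
        rw [hK]; ring
    _ ≤ (Pl P)^[n] (A.indicator 1) x *
          eneg (mseq P G A n x / (Pl P)^[n] (A.indicator 1) x) :=
        mul_le_mul_right (eneg_anti (ENNReal.div_le_div_right hm _)) _
    _ ≤ (Ql P G)^[n] (A.indicator 1) x :=
        main_induction P V W G hG0 hVm hWm hGm C b κ hb hκ hdrift hGW A hA n x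
end

section
/- Let X be a measurable space, P a Markov transition kernel on X, f, s : X → [0,∞) measurable, v : X → [1,∞) measurable, and constants λ̄ > 0, b ≥ 0 such that f(x) ∫ v(y) P(x,dy) ≤ λ̄ v(x) + b s(x) for every x ∈ X. Then for every a ∈ [0,1] and every x ∈ X, f(x)^a ∫ v(y)^a P(x,dy) ≤ λ̄^a v(x)^a + a λ̄^{a−1} b s(x). -/
open MeasureTheory ProbabilityTheory Filter
open scoped ENNReal

/-- Jensen's inequality for `rpow` with exponent in `(0,1)` w.r.t. a probability measure. -/
lemma jensen_rpow_aux {α : Type*} [MeasurableSpace α] (μ : Measure α) [IsProbabilityMeasure μ]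
    {v : α → ℝ≥0∞} (hvm : Measurable v) {a : ℝ} (ha0 : 0 < a) (ha1 : a < 1) :
    ∫⁻ y, (v y) ^ a ∂μ ≤ (∫⁻ y, v y ∂μ) ^ a := by
  have hpq : (a⁻¹).HolderConjugate (1 - a)⁻¹ := Real.HolderConjugate.inv_one_sub_inv ha0 ha1
  have h := ENNReal.lintegral_mul_le_Lp_mul_Lq μ hpq
    (f := fun y => (v y) ^ a) (g := fun _ => (1 : ℝ≥0∞))
    ((hvm.pow_const a).aemeasurable) aemeasurable_const
  simp only [Pi.mul_apply, mul_one] at h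
  have h1 : ∀ y, ((v y) ^ a) ^ a⁻¹ = v y := by
    intro y
    rw [← ENNReal.rpow_mul, mul_inv_cancel₀ ha0.ne', ENNReal.rpow_one]
  have h2 : ((1 : ℝ≥0∞)) ^ (1 - a)⁻¹ = 1 := ENNReal.one_rpow _
  simp only [h1, h2, lintegral_one, measure_univ, ENNReal.one_rpow, mul_one,
    one_div, inv_inv] at h
  exact h

/-- Tangent-line (Bernoulli) bound for concave `rpow` in `ℝ≥0∞`. -/
lemma tangent_rpow_aux {c w : ℝ≥0∞} (hc0 : c ≠ 0) (hctop : c ≠ ∞) (hw : w ≠ ∞)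
    {a : ℝ} (ha0 : 0 ≤ a) (ha1 : a ≤ 1) :
    (c + w) ^ a ≤ c ^ a + ENNReal.ofReal a * c ^ (a - 1) * w := by
  -- Bernoulli: (1 + w/c)^a ≤ 1 + a * (w/c)
  have hx : w / c ≠ ∞ := by
    simp [ENNReal.div_eq_top, hc0, hw]
  have hxR : (0 : ℝ) ≤ (w / c).toReal := ENNReal.toReal_nonneg
  have hbern : ((1 : ℝ≥0∞) + w / c) ^ a ≤ 1 + ENNReal.ofReal a * (w / c) := by
    have hfin : (1 : ℝ≥0∞) + w / c ≠ ∞ := by simp [hx]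
    have hR : ((1 : ℝ) + (w / c).toReal) ^ a ≤ 1 + a * (w / c).toReal :=
      rpow_one_add_le_one_add_mul_self (by linarith) ha0 ha1
    calc ((1 : ℝ≥0∞) + w / c) ^ a
        = ENNReal.ofReal (((1 : ℝ) + (w / c).toReal) ^ a) := by
          rw [← ENNReal.ofReal_rpow_of_pos (by linarith)]
          congr 1
          rw [ENNReal.ofReal_add zero_le_one hxR, ENNReal.ofReal_one,
            ENNReal.ofReal_toReal hx]
      _ ≤ ENNReal.ofReal (1 + a * (w / c).toReal) := ENNReal.ofReal_le_ofReal hR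
      _ = 1 + ENNReal.ofReal a * (w / c) := by
          rw [ENNReal.ofReal_add zero_le_one (by positivity), ENNReal.ofReal_one,
            ENNReal.ofReal_mul ha0, ENNReal.ofReal_toReal hx]
  have hsplit : c + w = c * (1 + w / c) := by
    rw [mul_add, mul_one, ENNReal.mul_div_cancel hc0 hctop]
  calc (c + w) ^ a = c ^ a * ((1 : ℝ≥0∞) + w / c) ^ a := by
        rw [hsplit, ENNReal.mul_rpow_of_nonneg _ _ ha0]
    _ ≤ c ^ a * (1 + ENNReal.ofReal a * (w / c)) := by
        exact mul_le_mul_right hbern _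
    _ = c ^ a + ENNReal.ofReal a * c ^ (a - 1) * w := by
        rw [mul_add, mul_one]
        congr 1
        rw [ENNReal.rpow_sub _ _ hc0 hctop, ENNReal.rpow_one]
        rw [ENNReal.div_eq_inv_mul, ENNReal.div_eq_inv_mul]
        ring

/-- **Jensen bound in the proof of Theorem 2.4.** If the scaled kernel satisfies
`P_f v ≤ λ̄ v + b s`, i.e. `f(x) ∫ v dP(x,·) ≤ λ̄ v(x) + b s(x)` for all `x`, then for
every `a ∈ [0,1]`, `f(x)^a ∫ v^a dP(x,·) ≤ λ̄^a v(x)^a + a λ̄^{a−1} b s(x)`. -/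
theorem scaled_kernel_jensen_bound {X : Type*} [MeasurableSpace X]
    (P : Kernel X X) [IsMarkovKernel P]
    (f s : X → ℝ≥0∞) (hf : ∀ x, f x ≠ ∞) (hs : ∀ x, s x ≠ ∞)
    (hfm : Measurable f) (hsm : Measurable s)
    (v : X → ℝ≥0∞) (hv1 : ∀ x, 1 ≤ v x) (hvm : Measurable v)
    (lam b : ℝ≥0∞) (hlam0 : lam ≠ 0) (hlamtop : lam ≠ ∞) (hb : b ≠ ∞)
    (hyp : ∀ x, f x * ∫⁻ y, v y ∂(P x) ≤ lam * v x + b * s x) :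
    ∀ a : ℝ, a ∈ Set.Icc (0 : ℝ) 1 → ∀ x : X,
      (f x) ^ a * ∫⁻ y, (v y) ^ a ∂(P x) ≤
        lam ^ a * (v x) ^ a + ENNReal.ofReal a * lam ^ (a - 1) * b * s x := by
  rintro a ⟨ha0, ha1⟩ x
  rcases ha0.eq_or_lt with rfl | ha0'
  · simp [lintegral_one, measure_univ]
  -- Jensen step: ∫ v^a ≤ (∫ v)^a (trivial when a = 1)
  have hjensen : ∫⁻ y, (v y) ^ a ∂(P x) ≤ (∫⁻ y, v y ∂(P x)) ^ a := by
    rcases ha1.eq_or_lt with rfl | ha1'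
    · simp
    · exact jensen_rpow_aux (P x) hvm ha0' ha1'
  -- hence LHS ≤ (f x * ∫ v)^a ≤ (lam * v x + b * s x)^a
  have hstep : (f x) ^ a * ∫⁻ y, (v y) ^ a ∂(P x) ≤ (lam * v x + b * s x) ^ a := by
    calc (f x) ^ a * ∫⁻ y, (v y) ^ a ∂(P x)
        ≤ (f x) ^ a * (∫⁻ y, v y ∂(P x)) ^ a := mul_le_mul_right hjensen _
      _ = (f x * ∫⁻ y, v y ∂(P x)) ^ a := (ENNReal.mul_rpow_of_nonneg _ _ ha0).symm
      _ ≤ (lam * v x + b * s x) ^ a := ENNReal.rpow_le_rpow (hyp x) ha0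
  refine hstep.trans ?_
  -- If v x = ∞, the RHS is ∞.
  by_cases hvx : v x = ∞
  · have : lam ^ a * (v x) ^ a = ∞ := by
      rw [hvx, ENNReal.top_rpow_of_pos ha0',
        ENNReal.mul_top (ENNReal.rpow_pos (pos_iff_ne_zero.mpr hlam0) hlamtop).ne']
    simp [this]
  -- Tangent step with c = lam * v x, w = b * s x.
  have hc0 : lam * v x ≠ 0 := by
    refine mul_ne_zero hlam0 ?_
    exact fun h => by simpa [h] using hv1 x
  have hctop : lam * v x ≠ ∞ := ENNReal.mul_ne_top hlamtop hvx
  have hwtop : b * s x ≠ ∞ := ENNReal.mul_ne_top hb (hs x)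
  refine (tangent_rpow_aux hc0 hctop hwtop ha0 ha1).trans ?_
  rw [ENNReal.mul_rpow_of_nonneg _ _ ha0]
  refine add_le_add_right ?_ _
  have hle : (lam * v x) ^ (a - 1) ≤ lam ^ (a - 1) := by
    rw [ENNReal.mul_rpow_of_ne_top hlamtop hvx]
    have : (v x) ^ (a - 1) ≤ 1 := by
      rcases ha1.eq_or_lt with rfl | ha1'
      · simp
      · exact ENNReal.rpow_le_one_of_one_le_of_neg (hv1 x) (by linarith)
    calc lam ^ (a - 1) * (v x) ^ (a - 1) ≤ lam ^ (a - 1) * 1 := mul_le_mul_right this _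
      _ = lam ^ (a - 1) := mul_one _
  calc ENNReal.ofReal a * (lam * v x) ^ (a - 1) * (b * s x)
      ≤ ENNReal.ofReal a * lam ^ (a - 1) * (b * s x) :=
        mul_le_mul_left (mul_le_mul_right hle _) _
    _ = ENNReal.ofReal a * lam ^ (a - 1) * b * s x := by ring
end

section
/- Let D be a real-valued random variable with δ := −E[D] > 0, E[D²] < ∞, and P{D > 0} > 0, and let π be an invariant probability measure for the reflected random walk kernel x ↦ law of max(x + D, 0) on [0,∞), satisfying ∫ x π(dx) < ∞. Define V(x) := 1 + (2δ)⁻¹(x² + δx) and H(x) := V(x) − E[V(max(x + D, 0))]. Then H is π-integrable and ∫ H(x) π(dx) = 0; equivalently, ∫ x π(dx) = ∫ R(x) π(dx), where R(x) := x − H(x) is the bounded function from the drift identity E[V(max(x+D,0))] = V(x) − x + R(x). -/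
open MeasureTheory ProbabilityTheory Filter
open scoped ENNReal
open Topology

lemma abs_min_sub_min_le' (a b c : ℝ) : |min a c - min b c| ≤ |a - b| := by
  rcases min_cases a c with ⟨h1, h2⟩ | ⟨h1, h2⟩ <;>
    rcases min_cases b c with ⟨h3, h4⟩ | ⟨h3, h4⟩ <;>
      rw [h1, h3, abs_le] <;>
        constructor <;> nlinarith [le_abs_self (a - b), neg_abs_le (a - b)]

lemma integrable_fst_prod' {μ ν : Measure ℝ} [IsProbabilityMeasure ν] {h : ℝ → ℝ}
    (hh : Integrable h μ) : Integrable (fun p : ℝ × ℝ => h p.1) (μ.prod ν) := by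
  have := hh.mul_prod (integrable_const (1 : ℝ)) (ν := ν)
  simpa using this

lemma integral_fst_prod' {μ ν : Measure ℝ} [SFinite μ] [IsProbabilityMeasure ν] {h : ℝ → ℝ}
    (hh : Integrable h μ) : ∫ p, h p.1 ∂(μ.prod ν) = ∫ x, h x ∂μ := by
  rw [integral_prod _ (integrable_fst_prod' hh)]
  simp


/-- **Section 3.2: `π(H) = 0` for the control variate `H = V − PV`.** For the reflected
random walk with increment `D` (`δ = −E[D] > 0`, `E[D²] < ∞`, `P{D > 0} > 0`) and an
invariant probability measure `π` with finite mean, the function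
`H(x) = V(x) − E[V(max(x+D,0))]`, with `V(x) = 1 + (2δ)⁻¹(x² + δx)`, is `π`-integrable
with `∫ H dπ = 0`; equivalently `∫ x π(dx) = ∫ (x − H(x)) π(dx)`. -/
theorem control_variate_mean_zero {Ω : Type*} [MeasureSpace Ω]
    [IsProbabilityMeasure (ℙ : Measure Ω)]
    (D : Ω → ℝ) (hD : Measurable D) (hDint : Integrable D)
    (δ : ℝ) (hδ : 0 < δ) (hmean : (∫ ω, D ω) = -δ)
    (hDsq : Integrable (fun ω => (D ω) ^ 2))
    (hpos : 0 < ℙ {ω | 0 < D ω})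
    (π : Measure ℝ) (hπprob : IsProbabilityMeasure π)
    (hπinv : Measure.map (fun p : ℝ × ℝ => max (p.1 + p.2) 0)
      (π.prod (Measure.map D ℙ)) = π)
    (hπint : Integrable (fun t : ℝ => t) π)
    (V H : ℝ → ℝ) (hV : ∀ x, V x = 1 + (2 * δ)⁻¹ * (x ^ 2 + δ * x))
    (hH : ∀ x, H x = V x - ∫ ω, V (max (x + D ω) 0)) :
    Integrable H π ∧ (∫ x, H x ∂π) = 0 ∧
      (∫ t, t ∂π) = ∫ t, (t - H t) ∂π := by
  classical
  haveI := hπprob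
  set ν : Measure ℝ := Measure.map D ℙ with hνdef
  haveI hνprob : IsProbabilityMeasure ν := Measure.isProbabilityMeasure_map hD.aemeasurable
  set Φ : ℝ × ℝ → ℝ := fun p : ℝ × ℝ => max (p.1 + p.2) 0 with hΦdef
  have hΦm : Measurable Φ := (measurable_fst.add measurable_snd).max measurable_const
  set ρ : Measure (ℝ × ℝ) := π.prod ν with hρdef
  -- ν-integrability facts
  have hid_ν : Integrable (fun t : ℝ => t) ν := by
    rw [hνdef]
    exact (integrable_map_measure aestronglyMeasurable_id hD.aemeasurable).mpr hDint
  have hsq_ν : Integrable (fun t : ℝ => t ^ 2) ν := by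
    rw [hνdef]
    exact (integrable_map_measure ((measurable_id.pow_const 2).aestronglyMeasurable)
      hD.aemeasurable).mpr hDsq
  have habs_ν : Integrable (fun t : ℝ => |t|) ν := hid_ν.abs
  -- a.e. nonnegativity
  have hms : MeasurableSet {x : ℝ | 0 ≤ x} := measurableSet_le measurable_const measurable_id
  have hπpos : ∀ᵐ x ∂π, 0 ≤ x := by
    rw [← hπinv, ae_map_iff hΦm.aemeasurable hms]
    filter_upwards with q
    exact le_max_right _ _
  have hρpos : ∀ᵐ q ∂ρ, 0 ≤ q.1 := by
    have hmap : Measure.map Prod.fst ρ = π := by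
      rw [hρdef, Measure.map_fst_prod, measure_univ, one_smul]
    have h := hπpos
    rw [← hmap, ae_map_iff measurable_fst.aemeasurable hms] at h
    exact h
  -- the integrable bound on the product
  have hBint : Integrable (fun q : ℝ × ℝ => 2 * (|q.1| * |q.2|) + q.2 ^ 2) ρ := by
    apply Integrable.add
    · exact (hπint.abs.mul_prod habs_ν).const_mul 2
    · have := (integrable_const (1 : ℝ) (μ := π)).mul_prod hsq_ν
      simpa using this
  -- the quadratic difference F
  set F : ℝ × ℝ → ℝ := fun q => Φ q ^ 2 - q.1 ^ 2 with hFdef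
  have hFm : Measurable F := (hΦm.pow_const 2).sub (measurable_fst.pow_const 2)
  have hFbd : ∀ q : ℝ × ℝ, 0 ≤ q.1 → ‖F q‖ ≤ 2 * (|q.1| * |q.2|) + q.2 ^ 2 := by
    intro q hq
    rcases le_or_gt 0 (q.1 + q.2) with h | h
    · have hFq : F q = 2 * (q.1 * q.2) + q.2 ^ 2 := by
        simp only [hFdef, hΦdef, max_eq_left h]; ring
      rw [hFq, Real.norm_eq_abs, abs_le]
      constructor <;>
        nlinarith [abs_mul q.1 q.2, le_abs_self (q.1 * q.2), neg_abs_le (q.1 * q.2),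
          sq_nonneg q.2, mul_nonneg (abs_nonneg q.1) (abs_nonneg q.2)]
    · have hFq : F q = -(q.1 ^ 2) := by
        simp only [hFdef, hΦdef, max_eq_right h.le]; ring
      have h1 : q.1 ≤ |q.2| := by
        have := neg_le_abs q.2; linarith
      rw [hFq, Real.norm_eq_abs, abs_neg, abs_of_nonneg (sq_nonneg _)]
      nlinarith [sq_abs q.2, abs_of_nonneg hq, mul_nonneg (abs_nonneg q.1) (abs_nonneg q.2)]
  have hFint : Integrable F ρ :=
    hBint.mono' hFm.aestronglyMeasurable (by filter_upwards [hρpos] with q hq using hFbd q hq)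
  -- Φ is integrable with the same integral as the identity under π
  have hΦint : Integrable Φ ρ := by
    have h1 : Integrable (fun t : ℝ => t) (Measure.map Φ ρ) := by rw [hπinv]; exact hπint
    exact (integrable_map_measure aestronglyMeasurable_id hΦm.aemeasurable).mp h1
  have hΦeq : ∫ q, Φ q ∂ρ = ∫ t, t ∂π := by
    conv_rhs => rw [← hπinv]
    exact (integral_map (f := fun t : ℝ => t) hΦm.aemeasurable
      measurable_id.aestronglyMeasurable).symm
  have hfst_int : Integrable (fun q : ℝ × ℝ => q.1) ρ := by
    rw [hρdef]; exact integrable_fst_prod' hπint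
  have hfst_eq : ∫ q, q.1 ∂ρ = ∫ t, t ∂π := by
    rw [hρdef]; exact integral_fst_prod' hπint
  -- truncated quadratic identities
  have htrunc : ∀ n : ℕ, ∫ q, (min (Φ q ^ 2) (n : ℝ) - min (q.1 ^ 2) (n : ℝ)) ∂ρ = 0 := by
    intro n
    have hbdd : ∀ (u : ℝ), ‖min (u ^ 2) (n : ℝ)‖ ≤ (n : ℝ) := by
      intro u
      rw [Real.norm_eq_abs, abs_of_nonneg (le_min (sq_nonneg _) (Nat.cast_nonneg n))]
      exact min_le_right _ _
    have hint1 : Integrable (fun q => min (Φ q ^ 2) (n : ℝ)) ρ := by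
      apply (integrable_const (n : ℝ)).mono'
        (((hΦm.pow_const 2).min measurable_const).aestronglyMeasurable)
      filter_upwards with q using hbdd _
    have hint2 : Integrable (fun q : ℝ × ℝ => min (q.1 ^ 2) (n : ℝ)) ρ := by
      apply (integrable_const (n : ℝ)).mono'
        (((measurable_fst.pow_const 2).min measurable_const).aestronglyMeasurable)
      filter_upwards with q using hbdd _
    have hπmin : Integrable (fun t : ℝ => min (t ^ 2) (n : ℝ)) π := by
      apply (integrable_const (n : ℝ)).mono'
        (((measurable_id.pow_const 2).min measurable_const).aestronglyMeasurable)
      filter_upwards with t using hbdd _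
    have he1 : ∫ q, min (Φ q ^ 2) (n : ℝ) ∂ρ = ∫ t, min (t ^ 2) (n : ℝ) ∂π := by
      conv_rhs => rw [← hπinv]
      exact (integral_map (f := fun t : ℝ => min (t ^ 2) (n : ℝ)) hΦm.aemeasurable
        (((measurable_id.pow_const 2).min measurable_const).aestronglyMeasurable)).symm
    have he2 : ∫ q, min ((q.1 : ℝ) ^ 2) (n : ℝ) ∂ρ = ∫ t, min (t ^ 2) (n : ℝ) ∂π := by
      rw [hρdef]; exact integral_fst_prod' hπmin
    rw [integral_sub hint1 hint2, he1, he2, sub_self]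
  -- dominated convergence: ∫ F = 0
  have hF0 : ∫ q, F q ∂ρ = 0 := by
    have hdct : Tendsto (fun n : ℕ => ∫ q, (min (Φ q ^ 2) (n : ℝ) - min (q.1 ^ 2) (n : ℝ)) ∂ρ)
        atTop (𝓝 (∫ q, F q ∂ρ)) := by
      apply tendsto_integral_of_dominated_convergence (fun q => |F q|)
      · intro n
        exact (((hΦm.pow_const 2).min measurable_const).sub
          ((measurable_fst.pow_const 2).min measurable_const)).aestronglyMeasurable
      · exact hFint.abs
      · intro n
        filter_upwards with q
        rw [Real.norm_eq_abs]
        have := abs_min_sub_min_le' (Φ q ^ 2) (q.1 ^ 2) (n : ℝ)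
        simpa [hFdef] using this
      · filter_upwards with q
        obtain ⟨N, hN⟩ := exists_nat_ge (max (Φ q ^ 2) (q.1 ^ 2))
        have hev : (fun n : ℕ => min (Φ q ^ 2) (n : ℝ) - min (q.1 ^ 2) (n : ℝ))
            =ᶠ[atTop] fun _ => F q := by
          filter_upwards [eventually_ge_atTop N] with n hn
          have hn' : (N : ℝ) ≤ (n : ℝ) := Nat.cast_le.mpr hn
          have h1 : Φ q ^ 2 ≤ (n : ℝ) := le_trans (le_trans (le_max_left _ _) hN) hn'
          have h2 : q.1 ^ 2 ≤ (n : ℝ) := le_trans (le_trans (le_max_right _ _) hN) hn'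
          simp [hFdef, min_eq_left h1, min_eq_left h2]
        exact Tendsto.congr' hev.symm tendsto_const_nhds
    have heq : (fun n : ℕ => ∫ q, (min (Φ q ^ 2) (n : ℝ) - min (q.1 ^ 2) (n : ℝ)) ∂ρ)
        = fun _ => (0 : ℝ) := funext htrunc
    rw [heq] at hdct
    exact tendsto_nhds_unique hdct tendsto_const_nhds
  -- the linear difference L
  set L : ℝ × ℝ → ℝ := fun q => Φ q - q.1 with hLdef
  have hLint : Integrable L ρ := hΦint.sub hfst_int
  have hL0 : ∫ q, L q ∂ρ = 0 := by
    simp only [hLdef]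
    rw [integral_sub hΦint hfst_int, hΦeq, hfst_eq, sub_self]
  -- Fubini
  rw [hρdef] at hFint hLint hF0 hL0
  have hgq_int : Integrable (fun x => ∫ y, F (x, y) ∂ν) π := hFint.integral_prod_left
  have hgl_int : Integrable (fun x => ∫ y, L (x, y) ∂ν) π := hLint.integral_prod_left
  have hgq0 : ∫ x, (∫ y, F (x, y) ∂ν) ∂π = 0 := by
    rw [← integral_prod F hFint]; exact hF0
  have hgl0 : ∫ x, (∫ y, L (x, y) ∂ν) ∂π = 0 := by
    rw [← integral_prod L hLint]; exact hL0
  -- pointwise identification of H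
  have key : ∀ x : ℝ,
      H x = -(2 * δ)⁻¹ * ((∫ y, F (x, y) ∂ν) + δ * ∫ y, L (x, y) ∂ν) := by
    intro x
    have hMint : Integrable (fun ω => max (x + D ω) 0) ℙ :=
      (((integrable_const x).add hDint : Integrable (fun ω => x + D ω) ℙ)).pos_part
    have hsum_int : Integrable (fun ω => (x + D ω) ^ 2) ℙ := by
      have h := (integrable_const (x ^ 2)).add ((hDint.const_mul (2 * x)).add hDsq)
      exact h.congr (Filter.Eventually.of_forall fun ω => by
        simp only [Pi.add_apply]; ring)
    have hMm : Measurable fun ω => max (x + D ω) 0 :=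
      (measurable_const.add hD).max measurable_const
    have hM2int : Integrable (fun ω => max (x + D ω) 0 ^ 2) ℙ := by
      apply hsum_int.mono' ((hMm.pow_const 2).aestronglyMeasurable)
      filter_upwards with ω
      rw [Real.norm_eq_abs, abs_of_nonneg (sq_nonneg _)]
      have h1 : max (x + D ω) 0 ≤ |x + D ω| := max_le (le_abs_self _) (abs_nonneg _)
      nlinarith [le_max_right (x + D ω) 0, sq_abs (x + D ω)]
    have hFx : ∫ y, F (x, y) ∂ν = (∫ ω, max (x + D ω) 0 ^ 2) - x ^ 2 := by
      have hmeasF : Measurable (fun y : ℝ => F (x, y)) := hFm.comp measurable_prodMk_left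
      rw [hνdef, integral_map hD.aemeasurable hmeasF.aestronglyMeasurable]
      have : (fun ω => F (x, D ω)) = fun ω => max (x + D ω) 0 ^ 2 - x ^ 2 := by
        funext ω; simp [hFdef, hΦdef]
      rw [this, integral_sub hM2int (integrable_const _), integral_const, probReal_univ]
      simp
    have hLx : ∫ y, L (x, y) ∂ν = (∫ ω, max (x + D ω) 0) - x := by
      have hmeasL : Measurable (fun y : ℝ => L (x, y)) := by
        simp only [hLdef, hΦdef]
        exact ((measurable_const.add measurable_id).max measurable_const).sub measurable_const
      rw [hνdef, integral_map hD.aemeasurable hmeasL.aestronglyMeasurable]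
      have : (fun ω => L (x, D ω)) = fun ω => max (x + D ω) 0 - x := by
        funext ω; simp [hLdef, hΦdef]
      rw [this, integral_sub hMint (integrable_const _), integral_const, probReal_univ]
      simp
    have hPV : (∫ ω, V (max (x + D ω) 0)) =
        1 + (2 * δ)⁻¹ * ((∫ ω, max (x + D ω) 0 ^ 2) + δ * ∫ ω, max (x + D ω) 0) := by
      simp_rw [hV]
      have i1 : Integrable (fun ω : Ω => δ * max (x + D ω) 0) ℙ := hMint.const_mul δ
      have i2 : Integrable (fun ω : Ω => max (x + D ω) 0 ^ 2 + δ * max (x + D ω) 0) ℙ :=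
        hM2int.add i1
      have i3 : Integrable
          (fun ω : Ω => (2 * δ)⁻¹ * (max (x + D ω) 0 ^ 2 + δ * max (x + D ω) 0)) ℙ :=
        i2.const_mul _
      rw [integral_add (integrable_const 1) i3, integral_const_mul, integral_add hM2int i1,
        integral_const_mul, integral_const, probReal_univ]
      simp
    rw [hH, hV, hPV, hFx, hLx]
    ring
  have hHfun : H = fun x => -(2 * δ)⁻¹ * ((∫ y, F (x, y) ∂ν) + δ * ∫ y, L (x, y) ∂ν) :=
    funext key
  have hHint : Integrable H π := by
    rw [hHfun]
    exact (hgq_int.add (hgl_int.const_mul δ)).const_mul _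
  have hH0 : ∫ x, H x ∂π = 0 := by
    have i1 : Integrable (fun x => δ * ∫ y, L (x, y) ∂ν) π := hgl_int.const_mul δ
    rw [hHfun, integral_const_mul, integral_add hgq_int i1, integral_const_mul, hgq0, hgl0]
    ring
  refine ⟨hHint, hH0, ?_⟩
  rw [integral_sub hπint hHint, hH0, sub_zero]
end
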